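/- Let A be an abelian category and f• : (X•,α•) → (Y•,β•) a morphism in MMor_k(A). Then f• is an admissible monomorphism (the cokernel, computed componentwise, again lies in MMor_k(A)) if and only if each f_i is a monomorphism and for each 1 ≤ i ≤ k the commutative square with sides α_i, f_i, f_{i+1}, β_i is a pullback square in A. -/

import Mathlib

open CategoryTheory Limits

open CategoryTheory.Abelian Pseudoelement
open scoped Pseudoelement

/-- In the monomorphism category `MMor_k(A)` over an abelian category `A`,
a morphism `f• : (X•,α•) → (Y•,β•)` is an admissible monomorphism (i.e. it is the kernel
part of a componentwise short exact sequence whose cokernel term again lies in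
`MMor_k(A)`) if and only if every component `f i` is a monomorphism and every square
with sides `α i`, `f i`, `f (i+1)`, `β i` is a pullback square in `A`. -/
theorem mmor_admissible_mono_iff
    {A : Type*} [Category A] [Abelian A] (k : ℕ)
    (X Y : Fin (k + 1) → A)
    (α : ∀ i : Fin k, X i.castSucc ⟶ X i.succ)
    (β : ∀ i : Fin k, Y i.castSucc ⟶ Y i.succ)
    (hα : ∀ i, Mono (α i)) (hβ : ∀ i, Mono (β i))
    (f : ∀ i, X i ⟶ Y i)
    (hf : ∀ i : Fin k, α i ≫ f i.succ = f i.castSucc ≫ β i) :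
    (∃ (Q : Fin (k + 1) → A)
       (γ : ∀ i : Fin k, Q i.castSucc ⟶ Q i.succ)
       (g : ∀ i, Y i ⟶ Q i)
       (w : ∀ i, f i ≫ g i = 0),
       (∀ i, Mono (γ i)) ∧
       (∀ i : Fin k, β i ≫ g i.succ = g i.castSucc ≫ γ i) ∧
       (∀ i, (ShortComplex.mk (f i) (g i) (w i)).ShortExact))
    ↔ ((∀ i, Mono (f i)) ∧
       ∀ i : Fin k, IsPullback (α i) (f i.castSucc) (f i.succ) (β i)) := by
  constructor
  · rintro ⟨Q, γ, g, w, hγ, hcomm, hse⟩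
    have hmono : ∀ i, Mono (f i) := fun i => (hse i).mono_f
    refine ⟨hmono, fun i => ?_⟩
    -- the pullback square, using that `X j` is the kernel of `g j`
    have hexact : ∀ j, (ShortComplex.mk (f j) (g j) (w j)).Exact := fun j => (hse j).exact
    have := hmono i.castSucc
    have := hmono i.succ
    refine IsPullback.of_isLimit (PullbackCone.IsLimit.mk (hf i)
      (fun s => (hexact i.castSucc).lift s.snd ?_) (fun s => ?_) (fun s => ?_) ?_)
    · -- `s.snd ≫ g i.castSucc = 0`
      rw [← cancel_mono (γ i), Category.assoc, zero_comp, ← hcomm i,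
        ← Category.assoc, ← s.condition, Category.assoc]
      change s.fst ≫ (ShortComplex.mk (f i.succ) (g i.succ) (w i.succ)).f ≫
        (ShortComplex.mk (f i.succ) (g i.succ) (w i.succ)).g = 0
      rw [(ShortComplex.mk (f i.succ) (g i.succ) (w i.succ)).zero, comp_zero]
    · -- factorization through `α i`
      rw [← cancel_mono (f i.succ), Category.assoc, hf i, ← Category.assoc,
        ShortComplex.Exact.lift_f, s.condition]
    · exact ShortComplex.Exact.lift_f _ _ _
    · intro s m hm₁ hm₂
      rw [← cancel_mono (f i.castSucc), hm₂, ShortComplex.Exact.lift_f]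
  · rintro ⟨hmono, hpb⟩
    haveI : ∀ i, Mono (f i) := hmono
    refine ⟨fun i => cokernel (f i),
      fun i => cokernel.desc (f i.castSucc) (β i ≫ cokernel.π (f i.succ)) ?_,
      fun i => cokernel.π (f i), fun i => cokernel.condition (f i), fun i => ?_,
      fun i => ?_, fun i => ?_⟩
    · rw [← Category.assoc, ← hf i, Category.assoc, cokernel.condition, comp_zero]
    · -- mono of the induced map on cokernels, via a pseudoelement chase
      set γi := cokernel.desc (f i.castSucc) (β i ≫ cokernel.π (f i.succ))
        (by rw [← Category.assoc, ← hf i, Category.assoc, cokernel.condition, comp_zero])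
        with hγi
      have hfac : cokernel.π (f i.castSucc) ≫ γi = β i ≫ cokernel.π (f i.succ) :=
        cokernel.π_desc _ _ _
      -- exactness of `X i.succ ⟶ Y i.succ ⟶ cokernel`
      have hex : (ShortComplex.mk (f i.succ) (cokernel.π (f i.succ))
          (cokernel.condition _)).Exact :=
        ShortComplex.exact_of_g_is_cokernel _ (cokernelIsCokernel (f i.succ))
      apply mono_of_zero_of_map_zero
      intro q hq
      obtain ⟨y, hy⟩ := pseudo_surjective_of_epi (cokernel.π (f i.castSucc)) q
      have h1 : (cokernel.π (f i.succ)) ((β i) y) = 0 := by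
        rw [← Pseudoelement.comp_apply, ← hfac, Pseudoelement.comp_apply, hy, hq]
      obtain ⟨x, hx⟩ := pseudo_exact_of_exact hex _ h1
      -- use the pullback to lift `(x, y)` to `X i.castSucc`
      obtain ⟨s, hs₁, hs₂⟩ := pseudo_pullback
        (p := x) (q := y) (f := f i.succ) (g := β i) (by rw [hx])
      have hiso := (hpb i).isoPullback_hom_snd
      have h2 : (f i.castSucc) (((hpb i).isoPullback.inv) s) = y := by
        rw [← Pseudoelement.comp_apply, ← hs₂]
        congr 1
        exact (hpb i).isoPullback_inv_snd
      rw [← hy, ← h2, ← Pseudoelement.comp_apply, cokernel.condition, Pseudoelement.zero_apply]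
    · exact (cokernel.π_desc _ _ _).symm
    · exact
        { exact := ShortComplex.exact_of_g_is_cokernel _ (cokernelIsCokernel (f i))
          mono_f := hmono i
          epi_g := by dsimp; infer_instance }
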